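/- Let i ≥ 1, let R ⊆ ℝ^i, let s ∈ R, and let p ∈ ℝ[x₁,…,x_i][x] with deg_x(p) ≥ 2. Set D = res_x(p, ∂p/∂x) ∈ ℝ[x₁,…,x_i], the resultant of p with its derivative with respect to the main variable x. If D(s) ≠ 0 and D is sign-invariant on R, then p is not nullified at any point of R, i.e. p(r,·) is not the zero polynomial for every r ∈ R. -/

import Mathlib

noncomputable section

open Polynomial

/-- Evaluate the coefficients of `p ∈ ℝ[x₁,…,xₙ][x]` at the point `r ∈ ℝⁿ`:
this is the univariate real polynomial `p(r,·)`. -/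
def evalAt {n : ℕ} (r : Fin n → ℝ) (p : Polynomial (MvPolynomial (Fin n) ℝ)) :
    Polynomial ℝ :=
  p.map (MvPolynomial.eval r)

/-- `p` is nullified at `r` if `p(r,·)` is the zero polynomial. -/
def NullifiedAt {n : ℕ} (p : Polynomial (MvPolynomial (Fin n) ℝ)) (r : Fin n → ℝ) : Prop :=
  evalAt r p = 0

/-- Iterated partial derivative of a multivariate polynomial, differentiating
successively with respect to the variables in the list `l` (a mixed partial
derivative of total order `l.length`). -/
def iterPDeriv {n : ℕ} (l : List (Fin n)) (p : MvPolynomial (Fin n) ℝ) :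
    MvPolynomial (Fin n) ℝ :=
  l.foldr (fun i q => MvPolynomial.pderiv i q) p

/-- The order of a multivariate polynomial at a point: the least `k ∈ ℕ` such
that some partial derivative of `p` of total order `k` does not vanish at `r`
(`⊤ = ∞` if there is no such `k`). -/
def orderAt {n : ℕ} (p : MvPolynomial (Fin n) ℝ) (r : Fin n → ℝ) : ℕ∞ :=
  sInf {k : ℕ∞ | ∃ l : List (Fin n), (l.length : ℕ∞) = k ∧
    MvPolynomial.eval r (iterPDeriv l p) ≠ 0}

/-- `p` is order-invariant on `R`: `ord_r(p) = ord_{r'}(p)` for all `r, r' ∈ R`. -/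
def OrderInvariantOn {n : ℕ} (p : MvPolynomial (Fin n) ℝ) (R : Set (Fin n → ℝ)) : Prop :=
  ∀ r ∈ R, ∀ r' ∈ R, orderAt p r = orderAt p r'

/-- `p` is sign-invariant on `R`: `sgn(p(r)) = sgn(p(r'))` for all `r, r' ∈ R`. -/
def SignInvariantOn {n : ℕ} (p : MvPolynomial (Fin n) ℝ) (R : Set (Fin n → ℝ)) : Prop :=
  ∀ r ∈ R, ∀ r' ∈ R, Real.sign (MvPolynomial.eval r p) = Real.sign (MvPolynomial.eval r' p)

/-- View `p ∈ ℝ[x₁,…,xₙ][x]` as an element of `ℝ[x₁,…,xₙ,x]`, a multivariate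
polynomial in `n+1` variables, the main variable `x` being the variable of
index `0`.  A point `(r, y) ∈ ℝⁿ × ℝ` corresponds to the point
`Fin.cons y r ∈ ℝ^{n+1}`. -/
def toMv {n : ℕ} (p : Polynomial (MvPolynomial (Fin n) ℝ)) : MvPolynomial (Fin (n + 1)) ℝ :=
  (MvPolynomial.finSuccEquiv ℝ n).symm p

/-- The Sylvester matrix of two univariate polynomials over a commutative ring:
`q.natDegree` rows of shifted coefficients of `p` followed by `p.natDegree`
rows of shifted coefficients of `q`. -/
def sylvesterMatrix {A : Type*} [CommRing A] (p q : Polynomial A) :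
    Matrix (Fin (q.natDegree + p.natDegree)) (Fin (q.natDegree + p.natDegree)) A :=
  Matrix.of fun i j =>
    if (i : ℕ) < q.natDegree then
      -- row of coefficients of `p`, shifted by `i`
      if (i : ℕ) ≤ (j : ℕ) ∧ (j : ℕ) ≤ (i : ℕ) + p.natDegree then
        p.coeff (p.natDegree + i - j)
      else 0
    else
      -- row of coefficients of `q`, shifted by `i - q.natDegree`
      if (i : ℕ) - q.natDegree ≤ (j : ℕ) ∧ (j : ℕ) ≤ (i : ℕ) - q.natDegree + q.natDegree then
        q.coeff (q.natDegree + ((i : ℕ) - q.natDegree) - j)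
      else 0

/-- The resultant of two univariate polynomials: the determinant of their
Sylvester matrix. -/
def resultant {A : Type*} [CommRing A] (p q : Polynomial A) : A :=
  (sylvesterMatrix p q).det

/-- Truncation: keep the first `d` coordinates, set the others to `0`. -/
def zeroAfter (d : ℕ) {n : ℕ} (y : Fin n → ℝ) : Fin n → ℝ :=
  fun j => if (j : ℕ) < d then y j else 0

/-- `(U, V, φ, ψ)` is an analytic chart at `r` exhibiting `R` locally as the
`d`-dimensional coordinate subspace: `U` is an open neighborhood of `r`, `V` is
open, `φ : U → V` is a bijection (with inverse `ψ`), `φ` and `ψ` are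
real-analytic, and `φ(R ∩ U) = {y ∈ V : y_{d+1} = ⋯ = y_n = 0}`. -/
def IsAnalyticChartAt (d : ℕ) {n : ℕ} (R : Set (Fin n → ℝ)) (r : Fin n → ℝ)
    (U V : Set (Fin n → ℝ)) (φ ψ : (Fin n → ℝ) → (Fin n → ℝ)) : Prop :=
  IsOpen U ∧ r ∈ U ∧ IsOpen V ∧
  AnalyticOnNhd ℝ φ U ∧ AnalyticOnNhd ℝ ψ V ∧
  Set.MapsTo φ U V ∧ Set.MapsTo ψ V U ∧
  (∀ x ∈ U, ψ (φ x) = x) ∧ (∀ y ∈ V, φ (ψ y) = y) ∧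
  φ '' (R ∩ U) = {y ∈ V | ∀ j : Fin n, d ≤ (j : ℕ) → y j = 0}

/-- `R ⊆ ℝⁿ` is a `d`-dimensional analytic submanifold. -/
def IsAnalyticSubmanifold (d : ℕ) {n : ℕ} (R : Set (Fin n → ℝ)) : Prop :=
  ∀ r ∈ R, ∃ U V φ ψ, IsAnalyticChartAt d R r U V φ ψ

/-- `θ` is analytic on the `d`-dimensional analytic submanifold `R`: around
every point of `R` there is an analytic chart for which the local
representation `(y₁,…,y_d) ↦ θ(φ⁻¹(y₁,…,y_d,0,…,0))` of `θ` is real-analytic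
on its open domain. -/
def AnalyticOnSubmanifold (d : ℕ) {n : ℕ} (R : Set (Fin n → ℝ))
    (θ : (Fin n → ℝ) → ℝ) : Prop :=
  ∀ r ∈ R, ∃ U V φ ψ, IsAnalyticChartAt d R r U V φ ψ ∧
    AnalyticOnNhd ℝ (fun y => θ (ψ (zeroAfter d y))) {y | zeroAfter d y ∈ V}

/-- `θ`, `m` form a system of `k` continuous real root functions (pointwise
strictly increasing in the index) with constant multiplicities, witnessing the
delineability of `p` on `R`: for every `r ∈ R` the real roots of `p(r,·)` are
exactly `θ 0 r, …, θ (k-1) r`, the root `θ j r` having multiplicity `m j`. -/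
def IsRootSystem {n : ℕ} (p : Polynomial (MvPolynomial (Fin n) ℝ))
    (R : Set (Fin n → ℝ)) (k : ℕ) (θ : Fin k → (Fin n → ℝ) → ℝ) (m : Fin k → ℕ) : Prop :=
  (∀ j, ContinuousOn (θ j) R) ∧
  (∀ r ∈ R, ∀ j j' : Fin k, j < j' → θ j r < θ j' r) ∧
  (∀ j, 0 < m j) ∧
  (∀ r ∈ R, ∀ y : ℝ, (evalAt r p).IsRoot y ↔ ∃ j, θ j r = y) ∧
  (∀ r ∈ R, ∀ j, (evalAt r p).rootMultiplicity (θ j r) = m j)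

/-- `p` is delineable on `R`. -/
def DelineableOn {n : ℕ} (p : Polynomial (MvPolynomial (Fin n) ℝ))
    (R : Set (Fin n → ℝ)) : Prop :=
  ∃ k θ m, IsRootSystem p R k θ m

/-- Analytic analogue of `IsRootSystem`, where the root functions are analytic
on the `d`-dimensional analytic submanifold `R`; this witnesses the analytic
delineability of `p` on `R`, and the `θ j` are the analytic root functions. -/
def IsAnalyticRootSystem (d : ℕ) {n : ℕ} (p : Polynomial (MvPolynomial (Fin n) ℝ))
    (R : Set (Fin n → ℝ)) (k : ℕ) (θ : Fin k → (Fin n → ℝ) → ℝ) (m : Fin k → ℕ) : Prop :=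
  (∀ j, AnalyticOnSubmanifold d R (θ j)) ∧
  (∀ r ∈ R, ∀ j j' : Fin k, j < j' → θ j r < θ j' r) ∧
  (∀ j, 0 < m j) ∧
  (∀ r ∈ R, ∀ y : ℝ, (evalAt r p).IsRoot y ↔ ∃ j, θ j r = y) ∧
  (∀ r ∈ R, ∀ j, (evalAt r p).rootMultiplicity (θ j r) = m j)

/-- `p` is analytically delineable on the `d`-dimensional analytic
submanifold `R`. -/
def AnalyticallyDelineableOn (d : ℕ) {n : ℕ} (p : Polynomial (MvPolynomial (Fin n) ℝ))
    (R : Set (Fin n → ℝ)) : Prop :=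
  ∃ k θ m, IsAnalyticRootSystem d p R k θ m

/-- The order of a function at a point: the least `m ∈ ℕ` such that the `m`-th
iterated Fréchet derivative of `h` at `x` is nonzero (`⊤ = ∞` if all iterated
derivatives of `h` vanish at `x`). -/
def fnOrderAt {n : ℕ} (h : (Fin n → ℝ) → ℝ) (x : Fin n → ℝ) : ℕ∞ :=
  sInf {m : ℕ∞ | ∃ k : ℕ, (k : ℕ∞) = m ∧ iteratedFDeriv ℝ k h x ≠ 0}

/-- Let `R ⊆ ℝ^i` (`i ≥ 1`), `s ∈ R`, and
`p ∈ ℝ[x₁,…,x_i][x]` with `deg_x(p) ≥ 2`.  Set `D = res_x(p, ∂p/∂x)`.  If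
`D(s) ≠ 0` and `D` is sign-invariant on `R`, then `p` is not nullified at any
point of `R`. -/
theorem not_nullified_of_discriminant_signInvariant
    (i : ℕ) (hi : 1 ≤ i) (R : Set (Fin i → ℝ)) (s : Fin i → ℝ) (hs : s ∈ R)
    (p : Polynomial (MvPolynomial (Fin i) ℝ)) (hdeg : 2 ≤ p.natDegree)
    (hDs : MvPolynomial.eval s (_root_.resultant p (Polynomial.derivative p)) ≠ 0)
    (hDinv : SignInvariantOn (_root_.resultant p (Polynomial.derivative p)) R) :
    ∀ r ∈ R, ¬ NullifiedAt p r := by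
  intro r hr hnull
  -- If `p` is nullified at `r`, every coefficient of `p` vanishes at `r`.
  have hcoeff : ∀ k : ℕ, MvPolynomial.eval r (p.coeff k) = 0 := by
    intro k
    have := congrArg (fun q => Polynomial.coeff q k) hnull
    simpa [NullifiedAt, evalAt, Polynomial.coeff_map] using this
  set q := Polynomial.derivative p with hq
  have hqdeg : 0 < q.natDegree := by
    have hc : q.coeff (p.natDegree - 1) ≠ 0 := by
      rw [hq]
      have h1 : p.natDegree - 1 + 1 = p.natDegree := by omega
      rw [Polynomial.coeff_derivative, h1]
      have hlc : p.coeff p.natDegree ≠ 0 := by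
        apply Polynomial.coeff_ne_zero_of_eq_degree
        rw [Polynomial.degree_eq_natDegree]
        intro h0
        simp [h0] at hdeg
      intro h
      rcases mul_eq_zero.mp h with h | h
      · exact hlc h
      · exact Nat.cast_add_one_ne_zero (R := MvPolynomial (Fin i) ℝ) (p.natDegree - 1)
          (by exact_mod_cast h)
    have := Polynomial.le_natDegree_of_ne_zero hc
    omega
  -- The resultant evaluated at `r` is zero (a row of the Sylvester matrix vanishes).
  have hDr : MvPolynomial.eval r (_root_.resultant p q) = 0 := by
    have hmap : MvPolynomial.eval r (_root_.resultant p q)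
        = ((MvPolynomial.eval r).mapMatrix (sylvesterMatrix p q)).det := by
      simpa [_root_.resultant] using (RingHom.map_det (MvPolynomial.eval r) (sylvesterMatrix p q))
    rw [hmap]
    apply Matrix.det_eq_zero_of_row_eq_zero (⟨0, by omega⟩ : Fin (q.natDegree + p.natDegree))
    intro j
    simp only [RingHom.mapMatrix_apply, Matrix.map_apply, sylvesterMatrix, Matrix.of_apply]
    rw [if_pos (by simpa using hqdeg)]
    split
    · exact hcoeff _
    · simp
  -- Sign-invariance contradicts `D(s) ≠ 0`.
  have hsign := hDinv s hs r hr
  rw [hDr, Real.sign_zero] at hsign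
  exact hDs (Real.sign_eq_zero_iff.mp hsign)
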